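/- Gaussian mutual-information lower bound via second moments: let γ > 0 and let ν be a probability measure on ℝ × ℝ with first marginal N(0,γ) and with second-marginal second moment γ̃ := E_ν[X̃²] satisfying 0 < γ̃ and θ² < γ·γ̃ where θ := E_ν[X·X̃]. Then I_ν ≥ (1/2)·log₂(γ·γ̃ / (γ·γ̃ − θ²)). -/

import Mathlib

open MeasureTheory ProbabilityTheory Real
open scoped ENNReal NNReal Classical

noncomputable section

/-- Kullback–Leibler divergence (in nats), valued in `ℝ≥0∞`. -/
def klDiv' {α : Type*} [MeasurableSpace α] (μ ν : Measure α) : ℝ≥0∞ :=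
  if μ ≪ ν ∧ Integrable (llr μ ν) μ then ENNReal.ofReal (∫ x, llr μ ν x ∂μ) else ∞

/-- Mutual information (in nats) of a joint probability measure on a product space.
The mutual information in bits is this quantity divided by `Real.log 2`. -/
def mutualInfo {α β : Type*} [MeasurableSpace α] [MeasurableSpace β]
    (μ : Measure (α × β)) : ℝ≥0∞ :=
  klDiv' μ ((μ.map Prod.fst).prod (μ.map Prod.snd))

/-- `μ` is a coupling of `p` and `q`. -/
def IsCoupling {α β : Type*} [MeasurableSpace α] [MeasurableSpace β]
    (μ : Measure (α × β)) (p : Measure α) (q : Measure β) : Prop :=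
  μ.map Prod.fst = p ∧ μ.map Prod.snd = q

/-- Under `μ`, the conditional expectation of the first coordinate given the σ-algebra
generated by the second coordinate equals the second coordinate a.s. -/
def MMSEProp {E : Type*} [MeasurableSpace E] [NormedAddCommGroup E] [NormedSpace ℝ E]
    [CompleteSpace E] (μ : Measure (E × E)) : Prop :=
  μ[(fun z => z.1) | MeasurableSpace.comap (Prod.snd : E × E → E) inferInstance]
    =ᵐ[μ] fun z => z.2

/-- The single-letter distortion-rate-perception function `D(R,C,P)`. -/
def DRCP {E : Type*} [MeasurableSpace E] [NormedAddCommGroup E] [NormedSpace ℝ E]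
    [CompleteSpace E] (p : Measure E) (R C P : ℝ) : ℝ :=
  sInf { d : ℝ | ∃ (q : Measure E) (μ ν : Measure (E × E)),
    IsProbabilityMeasure q ∧ IsCoupling μ p q ∧ IsCoupling ν p q ∧
    MMSEProp μ ∧
    mutualInfo μ ≤ ENNReal.ofReal (R * Real.log 2) ∧
    mutualInfo ν ≤ ENNReal.ofReal ((R + C) * Real.log 2) ∧
    Integrable (fun z => ‖z.1 - z.2‖ ^ 2) μ ∧
    Integrable (fun z => ‖z.1 - z.2‖ ^ 2) ν ∧
    d = ∫ z, ‖z.1 - z.2‖ ^ 2 ∂μ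
        + (max (Real.sqrt (∫ z, ‖z.1 - z.2‖ ^ 2 ∂ν) - Real.sqrt P) 0) ^ 2 }

theorem int_sq_exp {b : ℝ} (hb : 0 < b) :
    ∫ x : ℝ, x ^ 2 * exp (-b * x ^ 2) = Real.sqrt (π / b) / (2 * b) := by
  have hint2 : Integrable (fun x : ℝ => x ^ 2 * exp (-b * x ^ 2)) := by
    have := integrable_rpow_mul_exp_neg_mul_sq hb (s := 2) (by norm_num)
    simpa [Real.rpow_natCast] using this
  have hderiv : ∀ x : ℝ, HasDerivAt (fun x : ℝ => x * exp (-b * x ^ 2))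
      (exp (-b * x ^ 2) - 2 * b * (x ^ 2 * exp (-b * x ^ 2))) x := by
    intro x
    have h1 : HasDerivAt (fun x : ℝ => -b * x ^ 2) (-b * (2 * x)) x := by
      simpa using ((hasDerivAt_pow 2 x).const_mul (-b))
    have : HasDerivAt (fun x : ℝ => x * exp (-b * x ^ 2))
        (1 * exp (-b * x ^ 2) + x * (exp (-b * x ^ 2) * (-b * (2 * x)))) x :=
      (hasDerivAt_id x).mul h1.exp
    convert this using 1
    ring
  have hint' : Integrable (fun x : ℝ =>
      exp (-b * x ^ 2) - 2 * b * (x ^ 2 * exp (-b * x ^ 2))) :=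
    (integrable_exp_neg_mul_sq hb).sub (hint2.const_mul _)
  have h0 := integral_eq_zero_of_hasDerivAt_of_integrable hderiv hint'
    (integrable_mul_exp_neg_mul_sq hb)
  rw [integral_sub (integrable_exp_neg_mul_sq hb) (hint2.const_mul _),
    MeasureTheory.integral_const_mul, integral_gaussian] at h0
  field_simp at h0 ⊢
  linarith

theorem lintegral_sq_gaussian (v : ℝ≥0) (hv : v ≠ 0) :
    ∫⁻ x, ENNReal.ofReal (x ^ 2) ∂(gaussianReal 0 v) = ENNReal.ofReal v := by
  have hv0 : (0:ℝ) < v := lt_of_le_of_ne v.coe_nonneg (by exact_mod_cast (Ne.symm hv))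
  have hb : (0:ℝ) < (2 * (v:ℝ))⁻¹ := by positivity
  rw [gaussianReal_of_var_ne_zero 0 hv,
    lintegral_withDensity_eq_lintegral_mul _ (measurable_gaussianPDF 0 v)
      (by exact ENNReal.measurable_ofReal.comp (measurable_id.pow_const 2))]
  have heq : ∀ x : ℝ, (gaussianPDF 0 v * fun x => ENNReal.ofReal (x ^ 2)) x
      = ENNReal.ofReal (gaussianPDFReal 0 v x * x ^ 2) := by
    intro x
    simp only [Pi.mul_apply, gaussianPDF]
    rw [← ENNReal.ofReal_mul (gaussianPDFReal_nonneg 0 v x)]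
  simp_rw [heq]
  have hpdf : ∀ x : ℝ, gaussianPDFReal 0 v x * x ^ 2
      = (Real.sqrt (2 * π * v))⁻¹ * (x ^ 2 * exp (-(2 * (v:ℝ))⁻¹ * x ^ 2)) := by
    intro x
    rw [gaussianPDFReal]
    rw [show -(x - 0) ^ 2 / (2 * (v:ℝ)) = -(2 * (v:ℝ))⁻¹ * x ^ 2 by field_simp; ring]
    ring
  simp_rw [hpdf]
  have hint : Integrable (fun x : ℝ => x ^ 2 * exp (-(2 * (v:ℝ))⁻¹ * x ^ 2)) := by
    have := integrable_rpow_mul_exp_neg_mul_sq hb (s := 2) (by norm_num)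
    simpa [Real.rpow_natCast] using this
  rw [← ofReal_integral_eq_lintegral_ofReal (hint.const_mul _)
    (Filter.Eventually.of_forall fun x => by positivity)]
  congr 1
  rw [MeasureTheory.integral_const_mul, int_sq_exp hb]
  rw [show π / (2 * (v:ℝ))⁻¹ = 2 * π * v by field_simp]
  rw [show (2 : ℝ) * (2 * (v:ℝ))⁻¹ = (v:ℝ)⁻¹ by field_simp]
  have hs : Real.sqrt (2 * π * v) ≠ 0 := by
    refine ne_of_gt (Real.sqrt_pos.2 (by positivity))
  field_simp

theorem integrable_sq_gaussian (v : ℝ≥0) (hv : v ≠ 0) :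
    Integrable (fun x : ℝ => x ^ 2) (gaussianReal 0 v) := by
  refine ⟨(measurable_id.pow_const 2).aestronglyMeasurable, ?_⟩
  rw [hasFiniteIntegral_iff_ofReal (Filter.Eventually.of_forall fun x => by positivity)]
  rw [lintegral_sq_gaussian v hv]
  exact ENNReal.ofReal_lt_top

theorem integral_sq_gaussian (v : ℝ≥0) (hv : v ≠ 0) :
    ∫ x, x ^ 2 ∂(gaussianReal 0 v) = v := by
  have := integral_eq_lintegral_of_nonneg_ae (μ := gaussianReal 0 v)
    (f := fun x : ℝ => x ^ 2) (Filter.Eventually.of_forall fun x => by positivity)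
    (measurable_id.pow_const 2).aestronglyMeasurable
  rw [this, lintegral_sq_gaussian v hv, ENNReal.toReal_ofReal v.coe_nonneg]

theorem gibbs_nonneg {α : Type*} [MeasurableSpace α] (μ ν : Measure α)
    [IsProbabilityMeasure μ] [IsProbabilityMeasure ν] (h : μ ≪ ν)
    (hi : Integrable (llr μ ν) μ) : 0 ≤ ∫ x, llr μ ν x ∂μ := by
  set g : α → ℝ := fun x => ((μ.rnDeriv ν) x).toReal with hg
  have hgmeas : Measurable g := (Measure.measurable_rnDeriv μ ν).ennreal_toReal
  have hg_pos : ∀ᵐ x ∂μ, 0 < g x := by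
    filter_upwards [Measure.rnDeriv_pos h, h.ae_le (Measure.rnDeriv_lt_top μ ν)] with x h1 h2
    exact ENNReal.toReal_pos h1.ne' h2.ne
  have hL : ∫⁻ x, ENNReal.ofReal (g x)⁻¹ ∂μ ≤ 1 := by
    rw [← Measure.withDensity_rnDeriv_eq μ ν h,
      lintegral_withDensity_eq_lintegral_mul _ (Measure.measurable_rnDeriv μ ν)
        (g := fun x => ENNReal.ofReal (g x)⁻¹) hgmeas.inv.ennreal_ofReal]
    calc ∫⁻ x, (μ.rnDeriv ν * fun x => ENNReal.ofReal (g x)⁻¹) x ∂ν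
        ≤ ∫⁻ _, 1 ∂ν := by
          refine lintegral_mono fun x => ?_
          simp only [Pi.mul_apply, hg]
          rcases eq_or_ne ((μ.rnDeriv ν) x) 0 with h0 | h0
          · simp [h0]
          rcases eq_or_ne ((μ.rnDeriv ν) x) ∞ with ht | ht
          · simp [ht]
          · rw [ENNReal.ofReal_inv_of_pos (ENNReal.toReal_pos h0 ht),
              ENNReal.ofReal_toReal ht, ENNReal.mul_inv_cancel h0 ht]
      _ = 1 := by simp
  have hginv_int : Integrable (fun x => (g x)⁻¹) μ := by
    refine ⟨hgmeas.inv.aestronglyMeasurable, ?_⟩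
    rw [hasFiniteIntegral_iff_ofReal (Filter.Eventually.of_forall fun x => by positivity)]
    exact lt_of_le_of_lt hL ENNReal.one_lt_top
  have hbound : ∀ᵐ x ∂μ, 1 - (g x)⁻¹ ≤ llr μ ν x := by
    filter_upwards [hg_pos] with x hx
    rw [llr_def]
    exact Real.one_sub_inv_le_log_of_pos hx
  have hmono := integral_mono_ae ((integrable_const (1:ℝ)).sub hginv_int) hi hbound
  have hI : ∫ x, (g x)⁻¹ ∂μ ≤ 1 := by
    rw [integral_eq_lintegral_of_nonneg_ae (f := fun x => (g x)⁻¹)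
      (Filter.Eventually.of_forall fun x => by positivity)
        (hgmeas.inv.aestronglyMeasurable : AEStronglyMeasurable (fun x => (g x)⁻¹) μ)]
    calc (∫⁻ x, ENNReal.ofReal (g x)⁻¹ ∂μ).toReal ≤ (1 : ℝ≥0∞).toReal :=
          ENNReal.toReal_mono ENNReal.one_ne_top hL
      _ = 1 := by simp
  simp only [Pi.sub_apply] at hmono
  rw [integral_sub (integrable_const 1) hginv_int] at hmono
  simp only [integral_const, measure_univ, probReal_univ, ENNReal.toReal_one, smul_eq_mul, one_mul] at hmono
  linarith

theorem pdf_identity (v : ℝ≥0) (hv : v ≠ 0) {s : ℝ} (hs : 0 < s) (m x : ℝ) :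
    gaussianPDFReal 0 v x
      * exp (-(x - m)^2/(2*s) + x^2/(2*(v:ℝ)) + (1/2) * Real.log ((v:ℝ)/s))
    = gaussianPDFReal m ⟨s, hs.le⟩ x := by
  have hv0 : (0:ℝ) < v := lt_of_le_of_ne v.coe_nonneg (by exact_mod_cast (Ne.symm hv))
  have hGs : (0:ℝ) < (v:ℝ)/s := by positivity
  have hexpc : exp ((1/2) * Real.log ((v:ℝ)/s)) = Real.sqrt ((v:ℝ)/s) := by
    rw [Real.sqrt_eq_rpow, Real.rpow_def_of_pos hGs]
    ring_nf
  unfold gaussianPDFReal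
  rw [Real.exp_add, Real.exp_add, hexpc]
  have h1 : exp (-(x - 0)^2/(2*(v:ℝ))) * exp (x^2/(2*(v:ℝ))) = 1 := by
    rw [← Real.exp_add]
    rw [show -(x - 0)^2/(2*(v:ℝ)) + x^2/(2*(v:ℝ)) = 0 by field_simp; ring]
    exact Real.exp_zero
  have hconst : (Real.sqrt (2*π*(v:ℝ)))⁻¹ * Real.sqrt ((v:ℝ)/s)
      = (Real.sqrt (2*π*s))⁻¹ := by
    rw [Real.sqrt_div hv0.le, Real.sqrt_mul (by positivity : (0:ℝ) ≤ 2*π) (v:ℝ),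
      Real.sqrt_mul (by positivity : (0:ℝ) ≤ 2*π) s]
    have h2 : Real.sqrt (v:ℝ) ≠ 0 := ne_of_gt (Real.sqrt_pos.2 hv0)
    have h3 : Real.sqrt s ≠ 0 := ne_of_gt (Real.sqrt_pos.2 hs)
    have h4 : Real.sqrt (2*π) ≠ 0 := ne_of_gt (Real.sqrt_pos.2 (by positivity))
    field_simp
  calc (Real.sqrt (2*π*(v:ℝ)))⁻¹ * exp (-(x - 0)^2/(2*(v:ℝ)))
        * (exp (-(x - m)^2/(2*s)) * exp (x^2/(2*(v:ℝ))) * Real.sqrt ((v:ℝ)/s))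
      = ((Real.sqrt (2*π*(v:ℝ)))⁻¹ * Real.sqrt ((v:ℝ)/s))
        * (exp (-(x - 0)^2/(2*(v:ℝ))) * exp (x^2/(2*(v:ℝ)))) * exp (-(x - m)^2/(2*s)) := by
        ring
    _ = (Real.sqrt (2*π*s))⁻¹ * exp (-(x - m)^2/(2*s)) := by rw [h1, hconst]; ring
    _ = gaussianPDFReal m ⟨s, hs.le⟩ x := by unfold gaussianPDFReal; rfl

theorem lintegral_exp_tilt (v : ℝ≥0) (hv : v ≠ 0) {s : ℝ} (hs : 0 < s) (m : ℝ) :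
    ∫⁻ x, ENNReal.ofReal (exp (-(x - m)^2/(2*s) + x^2/(2*(v:ℝ)) + (1/2) * Real.log ((v:ℝ)/s)))
      ∂(gaussianReal 0 v) = 1 := by
  have hmeas : Measurable fun x : ℝ =>
      ENNReal.ofReal (exp (-(x - m)^2/(2*s) + x^2/(2*(v:ℝ)) + (1/2) * Real.log ((v:ℝ)/s))) := by
    fun_prop
  rw [gaussianReal_of_var_ne_zero 0 hv,
    lintegral_withDensity_eq_lintegral_mul _ (measurable_gaussianPDF 0 v) hmeas]
  have heq : ∀ x : ℝ, (gaussianPDF 0 v * fun x => ENNReal.ofReal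
      (exp (-(x - m)^2/(2*s) + x^2/(2*(v:ℝ)) + (1/2) * Real.log ((v:ℝ)/s)))) x
      = gaussianPDF m ⟨s, hs.le⟩ x := by
    intro x
    simp only [Pi.mul_apply, gaussianPDF]
    rw [← ENNReal.ofReal_mul (gaussianPDFReal_nonneg 0 v x), pdf_identity v hv hs m x]
  simp_rw [heq]
  refine lintegral_gaussianPDF_eq_one m ?_
  intro h
  exact hs.ne' (congrArg NNReal.toReal h)

/-- **Gaussian mutual-information lower bound via second moments**:
if `ν` has first marginal `N(0,γ)`, second-marginal second moment `γ̃ > 0`, and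
`θ := E_ν[X·X̃]` with `θ² < γγ̃`, then `I_ν ≥ (1/2)log₂(γγ̃/(γγ̃ − θ²))` (in bits,
i.e. the KL divergence in nats is at least that quantity times `ln 2`). -/
theorem gaussian_mutual_info_lower_bound (γ : ℝ≥0) (hγ : 0 < γ)
    (ν : Measure (ℝ × ℝ)) (hν : IsProbabilityMeasure ν)
    (hfst : ν.map Prod.fst = gaussianReal 0 γ)
    (hint : Integrable (fun z => z.2 ^ 2) ν)
    (γt θ : ℝ) (hγt : γt = ∫ z, z.2 ^ 2 ∂ν) (hθ : θ = ∫ z, z.1 * z.2 ∂ν)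
    (hγtpos : 0 < γt) (hθlt : θ ^ 2 < (γ : ℝ) * γt) :
    ENNReal.ofReal ((1 / 2) * Real.logb 2 ((γ : ℝ) * γt / ((γ : ℝ) * γt - θ ^ 2))
        * Real.log 2)
      ≤ mutualInfo ν := by
  have hγne : γ ≠ 0 := hγ.ne'
  have hG : (0:ℝ) < (γ:ℝ) := hγ
  have hγtne : γt ≠ 0 := hγtpos.ne'
  set G : ℝ := (γ:ℝ) with hGdef
  set s : ℝ := G - θ^2/γt with hsdef
  have hs : 0 < s := by
    have h1 : θ^2/γt < G := (div_lt_iff₀ hγtpos).2 (by linarith)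
    simp only [hsdef]; linarith
  set α : ℝ := θ/γt with hαdef
  set c : ℝ := (1/2) * Real.log (G/s) with hcdef
  set f : ℝ×ℝ → ℝ := fun z => -(z.1 - α*z.2)^2/(2*s) + z.1^2/(2*G) + c with hfdef
  have hf_cont : Continuous f := by
    apply Continuous.add
    apply Continuous.add
    · fun_prop
    · fun_prop
    · exact continuous_const
  -- marginal instances
  have hm2 : IsProbabilityMeasure (ν.map Prod.snd) :=
    Measure.isProbabilityMeasure_map measurable_snd.aemeasurable
  have hm1 : IsProbabilityMeasure (ν.map Prod.fst) := by
    rw [hfst]; infer_instance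
  set pr : Measure (ℝ×ℝ) := (ν.map Prod.fst).prod (ν.map Prod.snd) with hprdef
  have hprprob : IsProbabilityMeasure pr := by rw [hprdef]; infer_instance
  -- lintegral of exp f over π equals 1
  have hmeas_expf : Measurable fun z : ℝ×ℝ => ENNReal.ofReal (exp (f z)) :=
    (Real.continuous_exp.comp hf_cont).measurable.ennreal_ofReal
  have hL : ∫⁻ z, ENNReal.ofReal (exp (f z)) ∂pr = 1 := by
    rw [hprdef, lintegral_prod_symm _ hmeas_expf.aemeasurable]
    have hinner : ∀ y : ℝ, ∫⁻ x, ENNReal.ofReal (exp (f (x, y))) ∂(ν.map Prod.fst) = 1 := by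
      intro y
      rw [hfst]
      have := lintegral_exp_tilt γ hγne hs (α*y)
      simpa [hfdef, hcdef] using this
    simp_rw [hinner]
    simp
  have hexpf_nonneg : 0 ≤ᵐ[pr] fun z => exp (f z) :=
    Filter.Eventually.of_forall fun z => (Real.exp_pos _).le
  have hexp_int : Integrable (fun z => exp (f z)) pr := by
    refine ⟨(Real.continuous_exp.comp hf_cont).aestronglyMeasurable, ?_⟩
    rw [hasFiniteIntegral_iff_ofReal hexpf_nonneg, hL]
    exact ENNReal.one_lt_top
  have hexp_val : ∫ z, exp (f z) ∂pr = 1 := by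
    rw [integral_eq_lintegral_of_nonneg_ae hexpf_nonneg
      (Real.continuous_exp.comp hf_cont).aestronglyMeasurable, hL]
    simp
  -- integrability / integrals of moments under ν
  have hx2 : Integrable (fun z : ℝ×ℝ => z.1^2) ν := by
    have h := integrable_sq_gaussian γ hγne
    rw [← hfst] at h
    have := (integrable_map_measure (measurable_id.pow_const 2).aestronglyMeasurable
      measurable_fst.aemeasurable).1 h
    exact this
  have hx2val : ∫ z : ℝ×ℝ, z.1^2 ∂ν = G := by
    have h := integral_map (measurable_fst.aemeasurable (μ := ν))
      (measurable_id.pow_const 2).aestronglyMeasurable (f := fun x : ℝ => x ^ 2)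
    rw [hfst, integral_sq_gaussian γ hγne] at h
    exact h.symm
  have hxy : Integrable (fun z : ℝ×ℝ => z.1*z.2) ν := by
    refine Integrable.mono' ((hx2.add hint).const_mul (1/2))
      (measurable_fst.mul measurable_snd).aestronglyMeasurable ?_
    refine Filter.Eventually.of_forall fun z => ?_
    rw [Real.norm_eq_abs, abs_mul]
    simp only [Pi.add_apply]
    nlinarith [sq_nonneg (|z.1| - |z.2|), abs_nonneg z.1, abs_nonneg z.2,
      sq_abs z.1, sq_abs z.2]
  have hfeq : f = fun z : ℝ×ℝ => c + (1/(2*G) - 1/(2*s)) * z.1^2 + (α/s) * (z.1*z.2)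
      + (-(α^2)/(2*s)) * z.2^2 := by
    funext z
    simp only [hfdef]
    field_simp
    ring
  have hf_int : Integrable f ν := by
    rw [hfeq]
    exact (((integrable_const c).add (hx2.const_mul _)).add (hxy.const_mul _)).add
      (hint.const_mul _)
  have h1 : Integrable (fun z : ℝ×ℝ => c + (1/(2*G) - 1/(2*s)) * z.1^2) ν :=
    (integrable_const c).add (hx2.const_mul _)
  have h2 : Integrable (fun z : ℝ×ℝ => c + (1/(2*G) - 1/(2*s)) * z.1^2
      + (α/s) * (z.1*z.2)) ν := h1.add (hxy.const_mul _)
  have hf_val : ∫ z, f z ∂ν = c := by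
    rw [hfeq]
    rw [integral_add h2 (hint.const_mul _), integral_add h1 (hxy.const_mul _),
      integral_add (integrable_const c) (hx2.const_mul _)]
    simp only [MeasureTheory.integral_const_mul]
    rw [hx2val, ← hθ, ← hγt, integral_const]
    simp only [measure_univ, probReal_univ, ENNReal.toReal_one, smul_eq_mul, one_mul]
    have hss : G - 2*α*θ + α^2*γt = s := by
      rw [hsdef, hαdef]
      field_simp
      ring
    have hsplit : (1/(2*G) - 1/(2*s)) * G + (α/s) * θ + (-(α^2)/(2*s)) * γt
        = 1/2 - (G - 2*α*θ + α^2*γt)/(2*s) := by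
      field_simp
      ring
    have hzero : (1/(2*G) - 1/(2*s)) * G + (α/s) * θ + (-(α^2)/(2*s)) * γt = 0 := by
      rw [hsplit, hss]
      field_simp
      ring
    linarith
  -- target value equals c
  have htarget : (1/2) * Real.logb 2 (G*γt/(G*γt - θ^2)) * Real.log 2 = c := by
    have hlog2 : Real.log 2 ≠ 0 := ne_of_gt (Real.log_pos (by norm_num))
    have hne : (0:ℝ) < G*γt - θ^2 := by nlinarith
    have hR : G*γt/(G*γt - θ^2) = G/s := by
      rw [div_eq_div_iff hne.ne' hs.ne', hsdef]
      field_simp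
    rw [Real.logb, hcdef, hR]
    field_simp
  -- conclude via tilting and Gibbs' inequality
  unfold mutualInfo klDiv'
  rw [← hprdef]
  split_ifs with h
  · obtain ⟨hac, hllr⟩ := h
    refine ENNReal.ofReal_le_ofReal ?_
    rw [htarget]
    have hρprob : IsProbabilityMeasure (pr.tilted f) := isProbabilityMeasure_tilted hexp_int
    have hacρ : ν ≪ pr.tilted f := hac.trans (absolutelyContinuous_tilted hexp_int)
    have hint2 : Integrable (llr ν (pr.tilted f)) ν :=
      integrable_llr_tilted_right hac hf_int hllr hexp_int
    have h0 := gibbs_nonneg ν (pr.tilted f) hacρ hint2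
    rw [integral_llr_tilted_right hac hf_int hexp_int hllr, hexp_val, Real.log_one] at h0
    linarith
  · exact le_top
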